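/- Composing the forward Toffoli ladder with XOR pre/post-processing computes the sum bits: for a, b ∈ {0,1}^n with carries c_i defined by c_0 = 0, c_{i+1} = a_i·b_i ⊕ (a_i ⊕ b_i)·c_i, the i-th bit of (a + b) mod 2^{n+1} equals a_i ⊕ b_i ⊕ c_i for 0 ≤ i ≤ n−1, and the n-th bit equals c_n. -/

import Mathlib

/-- The majority carry bits: `c_0 = 0` and `c_{i+1} = a_i·b_i ⊕ (a_i ⊕ b_i)·c_i`. -/
def carry (a b : ℕ → ZMod 2) : ℕ → ZMod 2
  | 0 => 0
  | i + 1 => a i * b i + (a i + b i) * carry a b i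

lemma key (x y z : ZMod 2) :
    x.val + y.val + z.val = (x + y + z).val + 2 * (x * y + (x + y) * z).val := by
  revert x y z; decide

lemma sum_lt (f : ℕ → ℕ) (h : ∀ j, f j ≤ 1) (i : ℕ) :
    (∑ j ∈ Finset.range i, f j * 2 ^ j) < 2 ^ i := by
  induction i with
  | zero => simp
  | succ i ih =>
    rw [Finset.sum_range_succ, pow_succ]
    have h2 : f i * 2 ^ i ≤ 2 ^ i := by
      calc f i * 2 ^ i ≤ 1 * 2 ^ i := Nat.mul_le_mul_right _ (h i)
        _ = 2 ^ i := one_mul _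
    omega

lemma bit_extract (m i : ℕ) (f : ℕ → ℕ) (h : ∀ j, f j ≤ 1) (him : i < m) :
    (∑ j ∈ Finset.range m, f j * 2 ^ j) / 2 ^ i % 2 = f i := by
  have h1 : i + (m - i) = m := by omega
  have hsplit : (∑ j ∈ Finset.range m, f j * 2 ^ j) =
      (∑ j ∈ Finset.range i, f j * 2 ^ j) +
        (∑ j ∈ Finset.range (m - i), f (i + j) * 2 ^ j) * 2 ^ i := by
    calc ∑ j ∈ Finset.range m, f j * 2 ^ j
        = ∑ j ∈ Finset.range (i + (m - i)), f j * 2 ^ j := by rw [h1]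
      _ = (∑ j ∈ Finset.range i, f j * 2 ^ j) +
            ∑ j ∈ Finset.range (m - i), f (i + j) * 2 ^ (i + j) :=
          Finset.sum_range_add _ _ _
      _ = (∑ j ∈ Finset.range i, f j * 2 ^ j) +
            (∑ j ∈ Finset.range (m - i), f (i + j) * 2 ^ j) * 2 ^ i := by
          rw [Finset.sum_mul]
          congr 1
          apply Finset.sum_congr rfl
          intros
          rw [pow_add]; ring
  rw [hsplit, Nat.add_mul_div_right _ _ (pow_pos (by norm_num) i),
    Nat.div_eq_of_lt (sum_lt f h i), Nat.zero_add]
  have hmi : m - i = (m - i - 1) + 1 := by omega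
  rw [hmi, Finset.sum_range_succ']
  simp only [pow_succ, pow_zero, one_mul, Nat.add_zero, mul_one]
  have h3 : (∑ j ∈ Finset.range (m - i - 1), f (i + (j + 1)) * (2 ^ j * 2)) =
      2 * ∑ j ∈ Finset.range (m - i - 1), f (i + (j + 1)) * 2 ^ j := by
    rw [Finset.mul_sum]; apply Finset.sum_congr rfl; intros; ring
  rw [h3]
  have := h i
  omega

lemma invariant (a b : ℕ → ZMod 2) (i : ℕ) :
    (∑ j ∈ Finset.range i, (a j).val * 2 ^ j) +
      (∑ j ∈ Finset.range i, (b j).val * 2 ^ j) =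
    (∑ j ∈ Finset.range i, (a j + b j + carry a b j).val * 2 ^ j) +
      (carry a b i).val * 2 ^ i := by
  induction i with
  | zero => simp [carry]
  | succ i ih =>
    simp only [Finset.sum_range_succ]
    have hc : carry a b (i + 1) = a i * b i + (a i + b i) * carry a b i := rfl
    have hkP := congrArg (· * 2 ^ i) (key (a i) (b i) (carry a b i))
    rw [hc, pow_succ]
    ring_nf at hkP ⊢
    linarith [ih, hkP]

/-- The sum bits of `(a + b) mod 2^{n+1}`: the `i`-th bit equals `a_i ⊕ b_i ⊕ c_i` for
`0 ≤ i ≤ n−1`, and the `n`-th bit equals `c_n`. -/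
theorem sum_bits_correct (n : ℕ) (a b : ℕ → ZMod 2) :
    (∀ i < n,
      ((∑ j ∈ Finset.range n, (a j).val * 2 ^ j) +
        (∑ j ∈ Finset.range n, (b j).val * 2 ^ j)) % 2 ^ (n + 1) / 2 ^ i % 2 =
        (a i + b i + carry a b i).val) ∧
    ((∑ j ∈ Finset.range n, (a j).val * 2 ^ j) +
        (∑ j ∈ Finset.range n, (b j).val * 2 ^ j)) % 2 ^ (n + 1) / 2 ^ n % 2 =
      (carry a b n).val := by
  set g : ℕ → ℕ := fun j => if j < n then (a j + b j + carry a b j).val else (carry a b n).val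
    with hg
  have hg1 : ∀ j, g j ≤ 1 := by
    intro j
    simp only [hg]
    split <;> exact Nat.lt_succ_iff.mp (ZMod.val_lt _)
  have hN : (∑ j ∈ Finset.range n, (a j).val * 2 ^ j) +
      (∑ j ∈ Finset.range n, (b j).val * 2 ^ j) =
      ∑ j ∈ Finset.range (n + 1), g j * 2 ^ j := by
    rw [invariant, Finset.sum_range_succ]
    congr 1
    · apply Finset.sum_congr rfl
      intro j hj
      simp [hg, Finset.mem_range.mp hj]
    · simp [hg]
  rw [hN, Nat.mod_eq_of_lt (sum_lt g hg1 (n + 1))]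
  constructor
  · intro i hi
    rw [bit_extract (n + 1) i g hg1 (by omega)]
    simp [hg, hi]
  · rw [bit_extract (n + 1) n g hg1 (by omega)]
    simp [hg]
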